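/- arXiv:2004.10378 — 5 statements merged into one kernel-verified Lean document; each statement's English description precedes it below -/
import Mathlib

section
/- Let G be a group (with the discrete topology) and μ a finitely supported probability measure on G, i.e. μ = Σ_{a∈A} r_a δ_a for a finite set A ⊆ G with all r_a > 0 and Σ r_a = 1. If μ is idempotent under convolution, μ ∗ μ = μ, then A is a finite subgroup of G and μ is the uniform measure on A, i.e. r_a = 1/|A| for all a ∈ A. -/
open MeasureTheory

lemma sum_eq_forall_eq {α : Type*} (s : Finset α) (f g : α → ENNReal)
    (hle : ∀ a ∈ s, f a ≤ g a) (htop : ∑ a ∈ s, g a ≠ ⊤)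
    (heq : ∑ a ∈ s, f a = ∑ a ∈ s, g a) : ∀ a ∈ s, f a = g a := by
  classical
  intro a ha
  refine le_antisymm (hle a ha) ?_
  rw [← Finset.add_sum_erase s f ha, ← Finset.add_sum_erase s g ha] at heq
  have hT : ∑ x ∈ s.erase a, g x ≠ ⊤ :=
    ne_top_of_le_ne_top htop (Finset.sum_le_sum_of_subset (Finset.erase_subset _ _))
  have hle' : ∑ x ∈ s.erase a, f x ≤ ∑ x ∈ s.erase a, g x :=
    Finset.sum_le_sum fun i hi => hle i (Finset.mem_of_mem_erase hi)
  have h2 : g a + ∑ x ∈ s.erase a, g x ≤ f a + ∑ x ∈ s.erase a, g x := by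
    rw [← heq]; exact add_le_add le_rfl hle'
  exact (ENNReal.add_le_add_iff_right hT).mp h2

/-- Convolution of two measures on a group: the pushforward of the product
measure under the multiplication map. -/
noncomputable def mconv {G : Type*} [Mul G] [MeasurableSpace G]
    (μ ν : Measure G) : Measure G :=
  Measure.map (fun p : G × G => p.1 * p.2) (μ.prod ν)

theorem stmt4 {G : Type*} [Group G] [MeasurableSpace G] [DiscreteMeasurableSpace G]
    (A : Finset G) (hA : A.Nonempty) (r : G → ENNReal)
    (hpos : ∀ a ∈ A, 0 < r a) (hsum : ∑ a ∈ A, r a = 1)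
    (μ : Measure G) (hμ : μ = ∑ a ∈ A, r a • Measure.dirac a)
    (hidem : mconv μ μ = μ) :
    ∃ H : Subgroup G, (H : Set G) = (A : Set G) ∧
      ∀ a ∈ A, r a = (A.card : ENNReal)⁻¹ := by
  classical
  set w : G → ENNReal := fun x => if x ∈ A then r x else 0 with hw
  -- values of μ
  have hμs : ∀ s : Set G, μ s = ∑ a ∈ A, r a * s.indicator 1 a := by
    intro s
    rw [hμ]
    simp [Measure.finset_sum_apply, Measure.dirac_apply]
  have hμpt : ∀ x : G, μ {x} = w x := by
    intro x
    rw [hμs]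
    simp only [Set.indicator_apply, Set.mem_singleton_iff, Pi.one_apply, mul_ite, mul_one,
      mul_zero]
    rw [Finset.sum_ite_eq' A x r]
  have hμA : μ ↑A = 1 := by
    rw [hμs]
    rw [← hsum]
    refine Finset.sum_congr rfl fun a ha => ?_
    simp [Set.indicator_apply, ha]
  have hμuniv : μ Set.univ = 1 := by
    rw [hμs, ← hsum]
    refine Finset.sum_congr rfl fun a ha => ?_
    simp
  haveI : IsFiniteMeasure μ := ⟨by rw [hμuniv]; exact ENNReal.one_lt_top⟩
  -- lintegral against μ
  have hLI : ∀ f : G → ENNReal, ∫⁻ x, f x ∂μ = ∑ a ∈ A, r a * f a := by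
    intro f
    rw [hμ, lintegral_finset_sum_measure]
    refine Finset.sum_congr rfl fun a _ => ?_
    rw [lintegral_smul_measure, lintegral_dirac, smul_eq_mul]
  -- the measurable surrogate for multiplication
  set SA : Set (G × G) := ↑A ×ˢ ↑A with hSAdef
  have hSAfin : SA.Finite := (A.finite_toSet.prod A.finite_toSet)
  have hSAm : MeasurableSet SA := hSAfin.measurableSet
  set g : G × G → G := fun p => if p ∈ SA then p.1 * p.2 else 1 with hg
  have hgm : Measurable g := by
    intro t _
    have hsplit : g ⁻¹' t = (SA ∩ g ⁻¹' t) ∪ (SAᶜ ∩ g ⁻¹' t) := by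
      rw [← Set.union_inter_distrib_right, Set.union_compl_self, Set.univ_inter]
    rw [hsplit]
    refine MeasurableSet.union ((hSAfin.inter_of_left _).measurableSet) ?_
    by_cases h1 : (1 : G) ∈ t
    · have : SAᶜ ∩ g ⁻¹' t = SAᶜ := by
        ext p
        simp only [Set.mem_inter_iff, Set.mem_compl_iff, Set.mem_preimage, hg,
          and_iff_left_iff_imp]
        intro hp
        simp [hp, h1]
      rw [this]; exact hSAm.compl
    · have : SAᶜ ∩ g ⁻¹' t = ∅ := by
        ext p
        simp only [Set.mem_inter_iff, Set.mem_compl_iff, Set.mem_preimage, hg,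
          Set.mem_empty_iff_false, iff_false, not_and]
        intro hp
        simp [hp, h1]
      rw [this]; exact MeasurableSet.empty
  have hae : (fun p : G × G => p.1 * p.2) =ᵐ[μ.prod μ] g := by
    have hcompl : (μ.prod μ) SAᶜ = 0 := by
      have h1 : (μ.prod μ) SA = 1 := by
        rw [hSAdef, Measure.prod_prod, hμA, one_mul]
      have h2 : (μ.prod μ) Set.univ = 1 := by
        rw [← Set.univ_prod_univ, Measure.prod_prod, hμuniv, one_mul]
      rw [measure_compl hSAm (by rw [h1]; exact ENNReal.one_ne_top), h2, h1, tsub_self]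
    have hmem : ∀ᵐ p ∂(μ.prod μ), p ∈ SA := by
      rw [MeasureTheory.ae_iff]
      exact hcompl
    filter_upwards [hmem] with p hp
    simp [hg, hp]
  have hconv : mconv μ μ = Measure.map g (μ.prod μ) := Measure.map_congr hae
  -- key convolution formula
  have key : ∀ c : G, (mconv μ μ) {c} = ∑ a ∈ A, r a * w (a⁻¹ * c) := by
    intro c
    rw [hconv, Measure.map_apply hgm (measurableSet_singleton c),
      Measure.prod_apply (hgm (measurableSet_singleton c)), hLI]
    refine Finset.sum_congr rfl fun x hx => ?_
    congr 1
    rw [hμs]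
    have hterm : ∀ b ∈ A, r b * (Prod.mk x ⁻¹' (g ⁻¹' {c})).indicator 1 b
        = if b = x⁻¹ * c then r b else 0 := by
      intro b hb
      simp only [Set.indicator_apply, Set.mem_preimage, Set.mem_singleton_iff, Pi.one_apply,
        mul_ite, mul_one, mul_zero]
      have hgx : g (x, b) = x * b := by
        have : (x, b) ∈ SA := by simp [hSAdef, hx, hb]
        simp [hg, this]
      rw [hgx]
      congr 1
      rw [eq_comm, eq_inv_mul_iff_mul_eq]
    rw [Finset.sum_congr rfl hterm, Finset.sum_ite_eq' A (x⁻¹ * c) r]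
  -- masterequation
  have E : ∀ c : G, w c = ∑ a ∈ A, r a * w (a⁻¹ * c) := by
    intro c
    rw [← key c, hidem, hμpt]
  -- max analysis
  obtain ⟨a₀, ha₀A, hmax⟩ := A.exists_max_image r hA
  set m := r a₀ with hm
  have hr_le_one : ∀ a ∈ A, r a ≤ 1 := fun a ha =>
    hsum ▸ Finset.single_le_sum (fun i _ => zero_le) ha
  have hm_top : m ≠ ⊤ := ne_top_of_le_ne_top ENNReal.one_ne_top (hr_le_one a₀ ha₀A)
  have hm0 : m ≠ 0 := (hpos a₀ ha₀A).ne'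
  have hwle : ∀ x, w x ≤ m := by
    intro x
    by_cases hx : x ∈ A
    · simpa [hw, hx] using hmax x hx
    · simp [hw, hx]
  have hsum_rm : ∑ a ∈ A, r a * m = m := by rw [← Finset.sum_mul, hsum, one_mul]
  have step : ∀ c : G, w c = m → ∀ a ∈ A, w (a⁻¹ * c) = m := by
    intro c hc a ha
    have hall := sum_eq_forall_eq A (fun a => r a * w (a⁻¹ * c)) (fun a => r a * m)
      (fun a _ => mul_le_mul_right (hwle _) _)
      (by rw [hsum_rm]; exact hm_top)
      (by rw [hsum_rm, ← E c, hc])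
    have := hall a ha
    exact (ENNReal.mul_right_inj (hpos a ha).ne' (ne_top_of_le_ne_top ENNReal.one_ne_top
      (hr_le_one a ha))).mp this
  have hwmem : ∀ x : G, w x = m → x ∈ A ∧ r x = m := by
    intro x hx
    by_cases h : x ∈ A
    · exact ⟨h, by simpa [hw, h] using hx⟩
    · exfalso; apply hm0; rw [← hx]; simp [hw, h]
  have hwa₀ : w a₀ = m := by simp [hw, ha₀A, hm]
  have hstep₀ := step a₀ hwa₀
  have hone : (1 : G) ∈ A ∧ r 1 = m := by
    have := hstep₀ a₀ ha₀A
    rw [inv_mul_cancel] at this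
    exact hwmem 1 this
  have hw1 : w 1 = m := by simp [hw, hone.1, hone.2]
  have hinv : ∀ a ∈ A, a⁻¹ ∈ A := by
    intro a ha
    have := step 1 hw1 a ha
    rw [mul_one] at this
    exact (hwmem _ this).1
  have hmul : ∀ x ∈ A, ∀ y ∈ A, x * y ∈ A := by
    intro x hx y hy
    have hle : r x * w (x⁻¹ * (x * y)) ≤ w (x * y) := by
      rw [E (x * y)]
      exact Finset.single_le_sum (f := fun a => r a * w (a⁻¹ * (x * y)))
        (fun i _ => zero_le) hx
    rw [inv_mul_cancel_left] at hle
    have hwy : w y = r y := by simp [hw, hy]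
    rw [hwy] at hle
    have hpos' : 0 < w (x * y) := lt_of_lt_of_le (by
      exact ENNReal.mul_pos (hpos x hx).ne' (hpos y hy).ne') hle
    by_contra h
    simp [hw, h] at hpos'
  -- uniformity
  have hinj : Function.Injective (fun a : G => a⁻¹ * a₀) := by
    intro x y h
    simpa using congrArg (fun z => (z * a₀⁻¹)⁻¹) h
  have himg : A.image (fun a => a⁻¹ * a₀) = A := by
    refine Finset.eq_of_subset_of_card_le ?_ ?_
    · intro b hb
      obtain ⟨a, ha, rfl⟩ := Finset.mem_image.mp hb
      exact (hwmem _ (hstep₀ a ha)).1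
    · rw [Finset.card_image_of_injective _ hinj]
  have hconst : ∀ b ∈ A, r b = m := by
    intro b hb
    rw [← himg] at hb
    obtain ⟨a, ha, rfl⟩ := Finset.mem_image.mp hb
    exact (hwmem _ (hstep₀ a ha)).2
  have hcardne : (A.card : ENNReal) ≠ 0 := Nat.cast_ne_zero.mpr hA.card_pos.ne'
  have hcard : (A.card : ENNReal) * m = 1 := by
    rw [← hsum, Finset.sum_congr rfl hconst, Finset.sum_const, nsmul_eq_mul]
  have hmval : m = (A.card : ENNReal)⁻¹ := by
    have : (A.card : ENNReal)⁻¹ * ((A.card : ENNReal) * m) = (A.card : ENNReal)⁻¹ * 1 := by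
      rw [hcard]
    rwa [← mul_assoc, ENNReal.inv_mul_cancel hcardne (by simp), one_mul, mul_one] at this
  refine ⟨{ carrier := ↑A,
            mul_mem' := fun {x y} hx hy => hmul x hx y hy,
            one_mem' := hone.1,
            inv_mem' := fun {x} hx => hinv x hx }, rfl, fun a ha => ?_⟩
  rw [hconst a ha, hmval]
end

section
/- Let (Ω, μ) be a probability space, ε > 0, and (A_n)_{n∈ℕ} a sequence of measurable sets with μ(A_n) ≥ ε for all n. Then for every k ∈ ℕ there exist indices i₁ < i₂ < ⋯ < i_k such that μ(A_{i₁} ∩ ⋯ ∩ A_{i_k}) > 0; in particular the intersection A_{i₁} ∩ ⋯ ∩ A_{i_k} is nonempty. -/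
open MeasureTheory

theorem stmt8 {Ω : Type*} [MeasurableSpace Ω] (μ : Measure Ω)
    [IsProbabilityMeasure μ] (ε : ENNReal) (hε : 0 < ε)
    (A : ℕ → Set Ω) (hA : ∀ n, MeasurableSet (A n))
    (hbound : ∀ n, ε ≤ μ (A n)) :
    ∀ k : ℕ, ∃ i : Fin k → ℕ, StrictMono i ∧
      0 < μ (⋂ j, A (i j)) ∧ (⋂ j, A (i j)).Nonempty := by
  intro k
  -- the set of points belonging to infinitely many `A n`
  set L : Set Ω := ⋂ N, ⋃ n ≥ N, A n with hL
  have hLmeas : ∀ N : ℕ, MeasurableSet (⋃ n ≥ N, A n) := fun N =>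
    MeasurableSet.biUnion (Set.to_countable _) fun n _ => hA n
  have hanti : Antitone fun N : ℕ => ⋃ n ≥ N, A n := fun N M hNM =>
    Set.biUnion_mono (fun n hn => le_trans hNM hn) fun _ _ => le_rfl
  have hLε : ε ≤ μ L := by
    rw [hL, Antitone.measure_iInter hanti (fun N => (hLmeas N).nullMeasurableSet)
      ⟨0, measure_ne_top μ _⟩]
    refine le_iInf fun N => le_trans (hbound N) (measure_mono ?_)
    intro x hx
    exact Set.mem_biUnion (x := N) (le_refl N) hx
  -- every point of L lies in infinitely many A n
  have hinf : ∀ ω ∈ L, {n | ω ∈ A n}.Infinite := by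
    intro ω hω
    rw [← Nat.frequently_atTop_iff_infinite, Filter.frequently_atTop]
    intro N
    have := Set.mem_iInter.1 hω N
    simpa using this
  -- cover L by countably many k-fold intersections
  have hcover : L ⊆ ⋃ i : {f : Fin k → ℕ // StrictMono f}, ⋂ j, A (i.1 j) := by
    intro ω hω
    have hS := hinf ω hω
    refine Set.mem_iUnion.2 ⟨⟨fun j => Nat.nth (· ∈ {n | ω ∈ A n}) j, ?_⟩, ?_⟩
    · exact fun a b hab => (Nat.nth_strictMono hS) hab
    · exact Set.mem_iInter.2 fun j => Nat.nth_mem_of_infinite hS j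
  -- one of the countably many intersections has positive measure
  have hnot : ¬ μ (⋃ i : {f : Fin k → ℕ // StrictMono f}, ⋂ j, A (i.1 j)) = 0 := by
    intro h0
    have : μ L = 0 := measure_mono_null hcover h0
    exact absurd (hLε.trans this.le) (by simpa using hε.ne')
  obtain ⟨i, hi⟩ := exists_measure_pos_of_not_measure_iUnion_null hnot
  exact ⟨i.1, i.2, hi, nonempty_of_measure_ne_zero hi.ne'⟩
end

section
/- Let S be a nonempty compact Hausdorff semigroup in which the maps x ↦ x·a are continuous for every a ∈ S, and let I be a minimal left ideal of S. Then the set J(I) of idempotents of I is nonempty, and for every p ∈ I and every idempotent i ∈ J(I), one has p·i = p. -/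
/-- A left ideal of a semigroup (viewed as the whole type): a nonempty subset
closed under multiplication on the left by arbitrary elements. -/
def IsLeftIdeal {S : Type*} [Semigroup S] (I : Set S) : Prop :=
  I.Nonempty ∧ ∀ s : S, ∀ x ∈ I, s * x ∈ I

/-- A minimal left ideal: a left ideal containing no proper left ideal. -/
def IsMinimalLeftIdeal {S : Type*} [Semigroup S] (I : Set S) : Prop :=
  IsLeftIdeal I ∧ ∀ J : Set S, J ⊆ I → IsLeftIdeal J → J = I

theorem stmt11 {S : Type*} [Nonempty S] [Semigroup S] [TopologicalSpace S]
    [CompactSpace S] [T2Space S]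
    (hcont : ∀ a : S, Continuous fun x : S => x * a)
    (I : Set S) (hI : IsMinimalLeftIdeal I) :
    (∃ i ∈ I, i * i = i) ∧
      ∀ p ∈ I, ∀ i ∈ I, i * i = i → p * i = p := by
  obtain ⟨⟨⟨x, hx⟩, hIdeal⟩, hmin⟩ := hI
  -- For any a ∈ I, the set S * a equals I
  have key : ∀ a ∈ I, (fun s : S => s * a) '' Set.univ = I := by
    intro a ha
    apply hmin
    · rintro _ ⟨s, -, rfl⟩
      exact hIdeal s a ha
    · refine ⟨⟨a * a, ⟨a, trivial, rfl⟩⟩, ?_⟩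
      rintro s _ ⟨t, -, rfl⟩
      exact ⟨s * t, trivial, mul_assoc s t a⟩
  -- I is compact
  have hIcomp : IsCompact I := by
    rw [← key x hx]
    exact (isCompact_univ).image (hcont x)
  have hIsub : ∀ y ∈ I, ∀ z ∈ I, y * z ∈ I := fun y _ z hz => hIdeal y z hz
  refine ⟨exists_idempotent_in_compact_subsemigroup hcont I ⟨x, hx⟩ hIcomp hIsub, ?_⟩
  intro p hp i hi hii
  have hp' : p ∈ (fun s : S => s * i) '' Set.univ := (key i hi).symm ▸ hp
  obtain ⟨q, -, rfl⟩ := hp'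
  rw [mul_assoc, hii]
end

section
/- Let S be a nonempty compact Hausdorff semigroup with continuous right translations x ↦ x·a, let I be a minimal left ideal, and let i ∈ I be an idempotent. Then i·I is a group with identity element i, and I is the disjoint union of the sets i·I over the idempotents i ∈ I. -/
/-- For an idempotent `j` in a minimal left ideal `I` (with the surjectivity
property `hSx`), the set `j * I` is a group with identity `j`. -/
private lemma group_key {S : Type*} [Semigroup S] {I : Set S}
    (hcl : ∀ s : S, ∀ x ∈ I, s * x ∈ I)
    (hSx : ∀ x ∈ I, ∀ y ∈ I, ∃ s : S, s * x = y)
    {j : S} (hjI : j ∈ I) (hj : j * j = j) :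
    j ∈ (fun p => j * p) '' I ∧
    (∀ x ∈ (fun p => j * p) '' I, ∀ y ∈ (fun p => j * p) '' I,
      x * y ∈ (fun p => j * p) '' I) ∧
    (∀ x ∈ (fun p => j * p) '' I, j * x = x ∧ x * j = x) ∧
    (∀ x ∈ (fun p => j * p) '' I, ∃ y ∈ (fun p => j * p) '' I,
      x * y = j ∧ y * x = j) := by
  set G := (fun p => j * p) '' I with hG
  have hmemG : j ∈ G := ⟨j, hjI, hj⟩
  have hGI : ∀ x ∈ G, x ∈ I := by
    rintro x ⟨p, hp, rfl⟩; exact hcl j p hp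
  have hleftid : ∀ x ∈ G, j * x = x := by
    rintro x ⟨p, hp, rfl⟩
    show j * (j * p) = j * p
    rw [← mul_assoc, hj]
  have hclosed : ∀ x ∈ G, ∀ y ∈ G, x * y ∈ G := by
    rintro _ ⟨p, hp, rfl⟩ _ ⟨q, hq, rfl⟩
    exact ⟨p * (j * q), hcl p _ (hcl j q hq), by simp [mul_assoc]⟩
  have hleftinv : ∀ x ∈ G, ∃ y ∈ G, y * x = j := by
    intro x hx
    obtain ⟨s, hs⟩ := hSx x (hGI x hx) j hjI
    refine ⟨j * (s * j), ⟨s * j, hcl s j hjI, rfl⟩, ?_⟩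
    calc j * (s * j) * x = j * (s * (j * x)) := by simp only [mul_assoc]
      _ = j * (s * x) := by rw [hleftid x hx]
      _ = j * j := by rw [hs]
      _ = j := hj
  have hinv : ∀ x ∈ G, ∃ y ∈ G, x * y = j ∧ y * x = j := by
    intro x hx
    obtain ⟨y, hy, hyx⟩ := hleftinv x hx
    obtain ⟨z, hz, hzy⟩ := hleftinv y hy
    have hxy : x * y = j := by
      calc x * y = j * (x * y) := (hleftid _ (hclosed x hx y hy)).symm
        _ = (z * y) * (x * y) := by rw [hzy]
        _ = z * ((y * x) * y) := by simp only [mul_assoc]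
        _ = z * (j * y) := by rw [hyx]
        _ = z * y := by rw [hleftid y hy]
        _ = j := hzy
    exact ⟨y, hy, hxy, hyx⟩
  have hrightid : ∀ x ∈ G, x * j = x := by
    intro x hx
    obtain ⟨y, hy, hxy, hyx⟩ := hinv x hx
    calc x * j = x * (y * x) := by rw [hyx]
      _ = (x * y) * x := by rw [mul_assoc]
      _ = j * x := by rw [hxy]
      _ = x := hleftid x hx
  exact ⟨hmemG, hclosed, fun x hx => ⟨hleftid x hx, hrightid x hx⟩, hinv⟩

theorem stmt12 {S : Type*} [Nonempty S] [Semigroup S] [TopologicalSpace S]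
    [CompactSpace S] [T2Space S]
    (hcont : ∀ a : S, Continuous fun x : S => x * a)
    (I : Set S) (hI : IsMinimalLeftIdeal I)
    (i : S) (hiI : i ∈ I) (hidem : i * i = i) :
    -- i • I is a group with identity i:
    (i ∈ (fun p => i * p) '' I) ∧
    (∀ x ∈ (fun p => i * p) '' I, ∀ y ∈ (fun p => i * p) '' I,
      x * y ∈ (fun p => i * p) '' I) ∧
    (∀ x ∈ (fun p => i * p) '' I, i * x = x ∧ x * i = x) ∧
    (∀ x ∈ (fun p => i * p) '' I, ∃ y ∈ (fun p => i * p) '' I,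
      x * y = i ∧ y * x = i) ∧
    -- I is the disjoint union of the sets j • I over idempotents j ∈ I:
    (I = ⋃ j ∈ {j ∈ I | j * j = j}, (fun p => j * p) '' I) ∧
    (∀ j ∈ I, j * j = j → ∀ k ∈ I, k * k = k → j ≠ k →
      Disjoint ((fun p => j * p) '' I) ((fun p => k * p) '' I)) := by
  obtain ⟨⟨hne, hcl⟩, hmin⟩ := hI
  -- For any x ∈ I, S * x = I.
  have hSxeq : ∀ x ∈ I, Set.range (· * x) = I := by
    intro x hx
    refine hmin _ ?_ ⟨Set.range_nonempty _, ?_⟩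
    · rintro _ ⟨s, rfl⟩; exact hcl s x hx
    · rintro s _ ⟨t, rfl⟩; exact ⟨s * t, by simp [mul_assoc]⟩
  have hSx : ∀ x ∈ I, ∀ y ∈ I, ∃ s : S, s * x = y := by
    intro x hx y hy
    have := hSxeq x hx
    rw [← this] at hy
    exact hy
  -- For any x ∈ I, I * x = I; in particular some e ∈ I has e * x = x.
  have hIx : ∀ x ∈ I, ∃ e ∈ I, e * x = x := by
    intro x hx
    have heq : (fun p => p * x) '' I = I := by
      refine hmin _ ?_ ⟨⟨x * x, x, hx, rfl⟩, ?_⟩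
      · rintro _ ⟨p, hp, rfl⟩; exact hcl p x hx
      · rintro s _ ⟨p, hp, rfl⟩
        exact ⟨s * p, hcl s p hp, by simp [mul_assoc]⟩
    rw [← heq] at hx
    obtain ⟨e, he, hex⟩ := hx
    -- careful: hx was consumed; re-derive membership
    exact ⟨e, by rw [← heq] at *; exact he, hex⟩
  -- I is compact (hence closed).
  have hIcomp : IsCompact I := by
    obtain ⟨x₀, hx₀⟩ := hne
    rw [← hSxeq x₀ hx₀, ← Set.image_univ]
    exact CompactSpace.isCompact_univ.image (hcont x₀)
  have hIclosed : IsClosed I := hIcomp.isClosed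
  have hkey := fun {j : S} (hjI : j ∈ I) (hj : j * j = j) =>
    group_key hcl hSx hjI hj
  obtain ⟨h1, h2, h3, h4⟩ := hkey hiI hidem
  refine ⟨h1, h2, h3, h4, ?_, ?_⟩
  · -- union
    apply Set.Subset.antisymm
    · intro x hx
      -- find idempotent e with e * x = x via Ellis–Numakura
      set A := {a ∈ I | a * x = x} with hA
      obtain ⟨e₀, he₀, he₀x⟩ := hIx x hx
      have hAne : A.Nonempty := ⟨e₀, he₀, he₀x⟩
      have hAcomp : IsCompact A := by
        have : A = I ∩ (fun a => a * x) ⁻¹' {x} := by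
          ext a; simp [hA]
        rw [this]
        exact hIcomp.inter_right ((isClosed_singleton).preimage (hcont x))
      have hAmul : ∀ a ∈ A, ∀ b ∈ A, a * b ∈ A := by
        rintro a ⟨haI, hax⟩ b ⟨hbI, hbx⟩
        exact ⟨hcl a b hbI, by rw [mul_assoc, hbx, hax]⟩
      obtain ⟨e, ⟨heI, hex⟩, hee⟩ :=
        exists_idempotent_in_compact_subsemigroup hcont A hAne hAcomp hAmul
      refine Set.mem_biUnion (show e ∈ {j ∈ I | j * j = j} from ⟨heI, hee⟩) ?_
      exact ⟨x, hx, hex⟩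
    · intro x hx
      simp only [Set.mem_iUnion, Set.mem_image, Set.mem_setOf_eq] at hx
      obtain ⟨j, ⟨hjI, _⟩, p, hp, rfl⟩ := hx
      exact hcl j p hp
  · -- disjointness
    intro j hjI hj k hkI hk hjk
    rw [Set.disjoint_left]
    rintro y hyj hyk
    obtain ⟨_, _, hidj, hinvj⟩ := hkey hjI hj
    obtain ⟨_, _, hidk, hinvk⟩ := hkey hkI hk
    obtain ⟨v, hv, hyv, hvy⟩ := hinvj y hyj
    obtain ⟨w, hw, hyw, hwy⟩ := hinvk y hyk
    have hjy : j * y = y := (hidj y hyj).1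
    have hyk' : y * k = y := (hidk y hyk).2
    have hjkk : j * k = k := by
      calc j * k = j * (y * w) := by rw [hyw]
        _ = (j * y) * w := by rw [mul_assoc]
        _ = y * w := by rw [hjy]
        _ = k := hyw
    have : j = k := by
      calc j = v * y := hvy.symm
        _ = v * (y * k) := by rw [hyk']
        _ = (v * y) * k := by rw [mul_assoc]
        _ = j * k := by rw [hvy]
        _ = k := hjkk
    exact hjk this
end

section
/- Let X be a compact Hausdorff totally disconnected space, D ⊆ X a subset, and μ an (outer and inner) regular Borel probability measure on X. Then μ lies in the weak* closure of the convex hull of the Dirac measures {δ_d : d ∈ D} (inside the space of Borel probability measures on X with the weak* topology) if and only if every clopen subset C ⊆ X with μ(C) > 0 satisfies C ∩ D ≠ ∅. -/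
open MeasureTheory Topology Filter
open scoped NNReal ENNReal BoundedContinuousFunction

namespace Stmt16Aux

noncomputable def Phi {X : Type*} [TopologicalSpace X] [MeasurableSpace X]
    (ν : ProbabilityMeasure X) : (X →ᵇ ℝ≥0) → ℝ≥0 :=
  fun f => ν.toFiniteMeasure.testAgainstNN f

section Helper
variable {X : Type*} [TopologicalSpace X] [MeasurableSpace X] [OpensMeasurableSpace X]


lemma phi_inducing : IsInducing (Phi (X := X)) := by
  have h1 : IsInducing (ProbabilityMeasure.toFiniteMeasure : ProbabilityMeasure X → FiniteMeasure X) := ⟨rfl⟩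
  have h2 : IsInducing (FiniteMeasure.toWeakDualBCNN : FiniteMeasure X → WeakDual ℝ≥0 (X →ᵇ ℝ≥0)) := ⟨rfl⟩
  have h3 : IsInducing (fun (φ : WeakDual ℝ≥0 (X →ᵇ ℝ≥0)) (f : X →ᵇ ℝ≥0) => φ f) := ⟨rfl⟩
  exact (h3.comp (h2.comp h1))

lemma mem_closure_of_approx (S : Set (ProbabilityMeasure X)) (μ : ProbabilityMeasure X)
    (h : ∀ (I : Finset (X →ᵇ ℝ≥0)) (ε : ℝ), 0 < ε → ∃ ν ∈ S, ∀ f ∈ I,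
      dist (Phi ν f) (Phi μ f) < ε) : μ ∈ closure S := by
  rw [mem_closure_iff_nhds]
  intro U hU
  rw [(phi_inducing).nhds_eq_comap, Filter.mem_comap] at hU
  obtain ⟨V, hV, hVU⟩ := hU
  rw [nhds_pi, Filter.mem_pi] at hV
  obtain ⟨I, hIfin, t, ht, hsub⟩ := hV
  have hball : ∀ f : X →ᵇ ℝ≥0, ∃ e : ℝ, 0 < e ∧ (f ∈ I → Metric.ball (Phi μ f) e ⊆ t f) := by
    intro f
    obtain ⟨e, he, hb⟩ := Metric.mem_nhds_iff.1 (ht f)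
    exact ⟨e, he, fun _ => hb⟩
  choose e he hb using hball
  set Ifin := hIfin.toFinset with hIfin_def
  set E : Finset ℝ := insert (1:ℝ) (Ifin.image e) with hE
  have hEne : E.Nonempty := ⟨1, Finset.mem_insert_self _ _⟩
  set εm := E.min' hEne with hεm
  have hεm_pos : 0 < εm := by
    rw [hεm, Finset.lt_min'_iff]
    intro y hy
    rw [hE, Finset.mem_insert] at hy
    rcases hy with rfl | hy
    · exact one_pos
    · obtain ⟨f, _, rfl⟩ := Finset.mem_image.1 hy
      exact he f
  obtain ⟨ν, hνS, hν⟩ := h Ifin εm hεm_pos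
  refine ⟨ν, hVU ?_, hνS⟩
  apply hsub
  intro f hf
  apply hb f hf
  rw [Metric.mem_ball]
  refine lt_of_lt_of_le (hν f (hIfin.mem_toFinset.2 hf)) ?_
  exact Finset.min'_le E (e f) (Finset.mem_insert_of_mem (Finset.mem_image_of_mem e (hIfin.mem_toFinset.2 hf)))

end Helper

lemma stmt16_approx {X : Type*} [TopologicalSpace X] [CompactSpace X] [T2Space X]
    [TotallyDisconnectedSpace X] [MeasurableSpace X] [BorelSpace X]
    (D : Set X) (μ : ProbabilityMeasure X)
    (hD : ∀ C : Set X, IsClopen C → 0 < (μ : Measure X) C → (C ∩ D).Nonempty)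
    (I : Finset (X →ᵇ ℝ≥0)) (ε : ℝ) (hε : 0 < ε) :
    ∃ ν ∈ {ν : ProbabilityMeasure X |
        ∃ (n : ℕ) (d : Fin n → X) (r : Fin n → ENNReal),
          (∀ j, d j ∈ D) ∧ (∑ j, r j = 1) ∧
          (ν : Measure X) = ∑ j, r j • Measure.dirac (d j)},
      ∀ f ∈ I, dist (Phi ν f) (Phi μ f) < ε := by
  classical
  obtain ⟨d0, _, hd0⟩ := hD Set.univ isClopen_univ (by simp)
  -- clopen small-oscillation neighborhoods
  have key : ∀ x : X, ∃ Vx : Set X, IsClopen Vx ∧ x ∈ Vx ∧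
      ∀ y ∈ Vx, ∀ f ∈ I, dist (f y) (f x) < ε/4 := by
    intro x
    have hUopen : IsOpen (⋂ f ∈ I, {y | dist (f y) (f x) < ε/4}) := by
      refine isOpen_biInter_finset fun f _ => ?_
      exact f.continuous.isOpen_preimage (Metric.ball (f x) (ε/4)) Metric.isOpen_ball
    have hxU : x ∈ ⋂ f ∈ I, {y | dist (f y) (f x) < ε/4} := by
      refine Set.mem_iInter₂.2 fun f _ => ?_
      simp only [Set.mem_setOf_eq, dist_self]
      linarith
    obtain ⟨Vx, hVx, hxV, hVU⟩ := compact_exists_isClopen_in_isOpen hUopen hxU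
    exact ⟨Vx, hVx, hxV, fun y hy f hf => Set.mem_iInter₂.1 (hVU hy) f hf⟩
  choose V hVclopen hxV hVosc using key
  obtain ⟨s, hs⟩ := isCompact_univ.elim_finite_subcover V (fun x => (hVclopen x).isOpen)
    (fun x _ => Set.mem_iUnion.2 ⟨x, hxV x⟩)
  set n := s.card with hn
  set e : Fin n → X := fun k => ((s.equivFin.symm k) : X) with he
  set W : Fin n → Set X := fun k => V (e k) \ ⋃ j ∈ Finset.Iio k, V (e j) with hW
  have hWclopen : ∀ k, IsClopen (W k) :=
    fun k => (hVclopen _).diff (isClopen_biUnion_finset fun j _ => hVclopen (e j))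
  have hWsub : ∀ k, W k ⊆ V (e k) := fun k => Set.diff_subset
  have hWmeas : ∀ k, MeasurableSet (W k) := fun k => (hWclopen k).isOpen.measurableSet
  have hWcover : (⋃ k, W k) = Set.univ := by
    refine Set.eq_univ_of_forall fun x => ?_
    have hx : ∃ k : Fin n, x ∈ V (e k) := by
      obtain ⟨y, hy, hxy⟩ := Set.mem_iUnion₂.1 (hs (Set.mem_univ x))
      refine ⟨s.equivFin ⟨y, hy⟩, ?_⟩
      simp only [he, Equiv.symm_apply_apply]
      exact hxy
    set T : Finset (Fin n) := Finset.univ.filter (fun k => x ∈ V (e k)) with hT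
    have hTne : T.Nonempty := by
      obtain ⟨k, hk⟩ := hx
      exact ⟨k, Finset.mem_filter.2 ⟨Finset.mem_univ _, hk⟩⟩
    set k0 := T.min' hTne with hk0
    refine Set.mem_iUnion.2 ⟨k0, ⟨(Finset.mem_filter.1 (T.min'_mem hTne)).2, ?_⟩⟩
    intro hmem
    obtain ⟨j, hj, hxj⟩ := Set.mem_iUnion₂.1 hmem
    have hjT : j ∈ T := Finset.mem_filter.2 ⟨Finset.mem_univ _, hxj⟩
    exact absurd (T.min'_le j hjT) (not_le.2 (Finset.mem_Iio.1 hj))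
  have hWdisj : Pairwise (Function.onFun Disjoint W) := by
    have aux : ∀ j k : Fin n, j < k → Disjoint (W j) (W k) := by
      intro j k hlt
      rw [Set.disjoint_left]
      intro x hxj hxk
      exact hxk.2 (Set.mem_biUnion (Finset.mem_Iio.2 hlt) (hWsub j hxj))
    intro j k hjk
    rcases hjk.lt_or_gt with h | h
    · exact aux j k h
    · exact (aux k j h).symm
  set r : Fin n → ℝ≥0∞ := fun k => (μ : Measure X) (W k) with hr
  have hrsum : ∑ k, r k = 1 := by
    calc ∑ k, r k = ∑' k, (μ : Measure X) (W k) := (tsum_fintype _).symm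
      _ = (μ : Measure X) (⋃ k, W k) := (measure_iUnion hWdisj hWmeas).symm
      _ = 1 := by rw [hWcover]; exact measure_univ
  set d : Fin n → X := fun k =>
    if h : 0 < (μ : Measure X) (W k) then (hD (W k) (hWclopen k) h).choose else d0 with hd
  have hdD : ∀ k, d k ∈ D := by
    intro k
    by_cases h : 0 < (μ : Measure X) (W k)
    · have hk : d k = (hD (W k) (hWclopen k) h).choose := by rw [hd]; exact dif_pos h
      rw [hk]; exact ((hD (W k) (hWclopen k) h).choose_spec).2
    · have hk : d k = d0 := by rw [hd]; exact dif_neg h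
      rw [hk]; exact hd0
  have hdW : ∀ k, 0 < (μ : Measure X) (W k) → d k ∈ W k := by
    intro k h
    have hk : d k = (hD (W k) (hWclopen k) h).choose := by rw [hd]; exact dif_pos h
    rw [hk]; exact ((hD (W k) (hWclopen k) h).choose_spec).1
  set νm : Measure X := ∑ k, r k • Measure.dirac (d k) with hνm
  have hprob : IsProbabilityMeasure νm := by
    constructor
    rw [hνm, Measure.finset_sum_apply]
    simp only [Measure.smul_apply, smul_eq_mul, Measure.dirac_apply_of_mem (Set.mem_univ _),
      mul_one]
    exact hrsum
  set ν : ProbabilityMeasure X := ⟨νm, hprob⟩ with hν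
  refine ⟨ν, ⟨n, d, r, hdD, hrsum, rfl⟩, ?_⟩
  intro f hf
  set η : ℝ≥0 := Real.toNNReal (ε/2) with hηdef
  have hη : (η : ℝ) = ε/2 := Real.coe_toNNReal _ (by linarith)
  set A : ℝ≥0∞ := ∫⁻ x, f x ∂(μ : Measure X) with hA
  set B : ℝ≥0∞ := ∫⁻ x, f x ∂νm with hBdef
  have hB : B = ∑ k, r k * (f (d k) : ℝ≥0∞) := by
    rw [hBdef, hνm, lintegral_finset_sum_measure]
    exact Finset.sum_congr rfl fun k _ => by rw [lintegral_smul_measure, lintegral_dirac, smul_eq_mul]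
  have hAsum : A = ∑ k, ∫⁻ x in W k, (f x : ℝ≥0∞) ∂(μ : Measure X) := by
    rw [hA, ← setLIntegral_univ, ← hWcover, lintegral_iUnion hWmeas hWdisj, tsum_fintype]
  have hosc : ∀ k, ∀ y ∈ W k, ∀ z ∈ W k, (f y : ℝ) ≤ (f z : ℝ) + ε/2 := by
    intro k y hy z hz
    have h1 : dist (f y) (f (e k)) < ε/4 := hVosc (e k) y (hWsub k hy) f hf
    have h2 : dist (f z) (f (e k)) < ε/4 := hVosc (e k) z (hWsub k hz) f hf
    rw [NNReal.dist_eq] at h1 h2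
    have h3 := abs_sub_le ((f y : ℝ)) ((f (e k) : ℝ)) ((f z : ℝ))
    have h4 : |(f (e k) : ℝ) - (f z : ℝ)| = |(f z : ℝ) - (f (e k) : ℝ)| := abs_sub_comm _ _
    have h5 := le_abs_self ((f y : ℝ) - (f z : ℝ))
    linarith
  have hosc' : ∀ k, ∀ y ∈ W k, ∀ z ∈ W k, (f y : ℝ≥0∞) ≤ (f z : ℝ≥0∞) + η := by
    intro k y hy z hz
    rw [← ENNReal.coe_add, ENNReal.coe_le_coe, ← NNReal.coe_le_coe, NNReal.coe_add, hη]
    exact hosc k y hy z hz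
  have claim1 : ∀ k, (∫⁻ x in W k, (f x : ℝ≥0∞) ∂(μ : Measure X)) ≤
      r k * (f (d k) : ℝ≥0∞) + r k * η := by
    intro k
    rcases eq_zero_or_pos ((μ : Measure X) (W k)) with h0 | hpos
    · rw [setLIntegral_measure_zero _ _ h0]
      exact zero_le
    · have hdk := hdW k hpos
      calc (∫⁻ x in W k, (f x : ℝ≥0∞) ∂(μ : Measure X))
          ≤ ∫⁻ _ in W k, ((f (d k) : ℝ≥0∞) + η) ∂(μ : Measure X) :=
            setLIntegral_mono measurable_const (fun y hy => hosc' k y hy (d k) hdk)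
        _ = ((f (d k) : ℝ≥0∞) + η) * (μ : Measure X) (W k) := setLIntegral_const _ _
        _ = r k * (f (d k) : ℝ≥0∞) + r k * η := by rw [hr]; ring
  have claim2 : ∀ k, r k * (f (d k) : ℝ≥0∞) ≤
      (∫⁻ x in W k, (f x : ℝ≥0∞) ∂(μ : Measure X)) + r k * η := by
    intro k
    rcases eq_zero_or_pos ((μ : Measure X) (W k)) with h0 | hpos
    · have : r k = 0 := h0
      rw [this]
      simp
    · have hdk := hdW k hpos
      have hmeas : Measurable fun y => ((f y : ℝ≥0∞) + η) :=
        (f.continuous.measurable.coe_nnreal_ennreal).add measurable_const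
      calc r k * (f (d k) : ℝ≥0∞) = (f (d k) : ℝ≥0∞) * (μ : Measure X) (W k) := by
            rw [hr]; ring
        _ = ∫⁻ _ in W k, (f (d k) : ℝ≥0∞) ∂(μ : Measure X) := (setLIntegral_const _ _).symm
        _ ≤ ∫⁻ y in W k, ((f y : ℝ≥0∞) + η) ∂(μ : Measure X) :=
            setLIntegral_mono hmeas (fun y hy => hosc' k (d k) hdk y hy)
        _ = (∫⁻ y in W k, (f y : ℝ≥0∞) ∂(μ : Measure X)) + η * (μ : Measure X) (W k) := by
            rw [lintegral_add_right _ measurable_const, setLIntegral_const]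
        _ = (∫⁻ x in W k, (f x : ℝ≥0∞) ∂(μ : Measure X)) + r k * η := by
            rw [hr]; ring_nf
  have hAB : A ≤ B + η := by
    calc A = ∑ k, ∫⁻ x in W k, (f x : ℝ≥0∞) ∂(μ : Measure X) := hAsum
      _ ≤ ∑ k, (r k * (f (d k) : ℝ≥0∞) + r k * η) := Finset.sum_le_sum fun k _ => claim1 k
      _ = (∑ k, r k * (f (d k) : ℝ≥0∞)) + ∑ k, r k * η := Finset.sum_add_distrib
      _ = B + (∑ k, r k) * η := by rw [hB, Finset.sum_mul]
      _ = B + η := by rw [hrsum, one_mul]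
  have hBA : B ≤ A + η := by
    calc B = ∑ k, r k * (f (d k) : ℝ≥0∞) := hB
      _ ≤ ∑ k, ((∫⁻ x in W k, (f x : ℝ≥0∞) ∂(μ : Measure X)) + r k * η) :=
          Finset.sum_le_sum fun k _ => claim2 k
      _ = (∑ k, ∫⁻ x in W k, (f x : ℝ≥0∞) ∂(μ : Measure X)) + ∑ k, r k * η :=
          Finset.sum_add_distrib
      _ = A + (∑ k, r k) * η := by rw [← hAsum, Finset.sum_mul]
      _ = A + η := by rw [hrsum, one_mul]
  have hAfin : A ≠ ⊤ := (f.lintegral_lt_top_of_nnreal (μ : Measure X)).ne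
  have hBfin : B ≠ ⊤ := by
    haveI := hprob
    exact (f.lintegral_lt_top_of_nnreal νm).ne
  show dist B.toNNReal A.toNNReal < ε
  have hb : (B.toNNReal : ℝ≥0∞) = B := ENNReal.coe_toNNReal hBfin
  have ha : (A.toNNReal : ℝ≥0∞) = A := ENNReal.coe_toNNReal hAfin
  have h1 : B.toNNReal ≤ A.toNNReal + η := by
    rw [← ENNReal.coe_le_coe, ENNReal.coe_add, ha, hb]
    exact hBA
  have h2 : A.toNNReal ≤ B.toNNReal + η := by
    rw [← ENNReal.coe_le_coe, ENNReal.coe_add, ha, hb]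
    exact hAB
  rw [← NNReal.coe_le_coe, NNReal.coe_add, hη] at h1 h2
  rw [NNReal.dist_eq, abs_sub_lt_iff]
  constructor <;> linarith

end Stmt16Aux

open Stmt16Aux

theorem stmt16 {X : Type*} [TopologicalSpace X] [CompactSpace X] [T2Space X]
    [TotallyDisconnectedSpace X] [MeasurableSpace X] [BorelSpace X]
    (D : Set X) (μ : ProbabilityMeasure X) (hreg : (μ : Measure X).Regular) :
    μ ∈ closure {ν : ProbabilityMeasure X |
        ∃ (n : ℕ) (d : Fin n → X) (r : Fin n → ENNReal),
          (∀ j, d j ∈ D) ∧ (∑ j, r j = 1) ∧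
          (ν : Measure X) = ∑ j, r j • Measure.dirac (d j)} ↔
      ∀ C : Set X, IsClopen C → 0 < (μ : Measure X) C → (C ∩ D).Nonempty := by
  constructor
  · intro hcl
    intro C hC hpos
    by_contra hne
    rw [Set.not_nonempty_iff_eq_empty] at hne
    have hle : ∀ z, C.indicator (fun _ => (1:ℝ≥0)) z ≤ 1 := fun z =>
      Set.indicator_apply_le' (fun _ => le_rfl) (fun _ => zero_le_one)
    set f : X →ᵇ ℝ≥0 :=
      ⟨⟨C.indicator (fun _ => 1), continuous_indicator (by simp [hC]) continuous_const.continuousOn⟩,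
        ⟨2, fun x y => by
          show dist (C.indicator (fun _ => (1:ℝ≥0)) x) (C.indicator (fun _ => (1:ℝ≥0)) y) ≤ 2
          have h1 : ((C.indicator (fun _ => (1:ℝ≥0)) x : ℝ≥0) : ℝ) ≤ 1 := by exact_mod_cast hle x
          have h2 : ((C.indicator (fun _ => (1:ℝ≥0)) y : ℝ≥0) : ℝ) ≤ 1 := by exact_mod_cast hle y
          have h3 : (0:ℝ) ≤ ((C.indicator (fun _ => (1:ℝ≥0)) x : ℝ≥0) : ℝ) := NNReal.coe_nonneg _
          have h4 : (0:ℝ) ≤ ((C.indicator (fun _ => (1:ℝ≥0)) y : ℝ≥0) : ℝ) := NNReal.coe_nonneg _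
          rw [NNReal.dist_eq]
          rw [abs_sub_le_iff]
          constructor <;> linarith⟩⟩ with hf
    have hg : Continuous (fun ν : ProbabilityMeasure X => ν.toFiniteMeasure.testAgainstNN f) :=
      ProbabilityMeasure.continuous_testAgainstNN_eval f
    have hmaps : Set.MapsTo (fun ν : ProbabilityMeasure X => ν.toFiniteMeasure.testAgainstNN f)
        {ν : ProbabilityMeasure X |
          ∃ (n : ℕ) (d : Fin n → X) (r : Fin n → ENNReal),
            (∀ j, d j ∈ D) ∧ (∑ j, r j = 1) ∧
            (ν : Measure X) = ∑ j, r j • Measure.dirac (d j)} {0} := by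
      rintro ν ⟨n, d, r, hd, hr, hcoe⟩
      have hnotC : ∀ j, d j ∉ C := by
        intro j hj
        have : d j ∈ C ∩ D := ⟨hj, hd j⟩
        rw [hne] at this
        exact this
      have : (∫⁻ x, (f x : ℝ≥0∞) ∂(ν : Measure X)) = 0 := by
        rw [hcoe, lintegral_finset_sum_measure]
        refine Finset.sum_eq_zero fun j _ => ?_
        rw [lintegral_smul_measure, lintegral_dirac]
        have hz : C.indicator (fun _ => (1:ℝ≥0)) (d j) = 0 := Set.indicator_of_notMem (hnotC j) _
        have hz' : (f (d j) : ℝ≥0) = 0 := hz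
        rw [hz']
        simp
      simp only [Set.mem_singleton_iff, FiniteMeasure.testAgainstNN]
      rw [ProbabilityMeasure.toMeasure_comp_toFiniteMeasure_eq_toMeasure, this]
      rfl
    have h0 : μ.toFiniteMeasure.testAgainstNN f ∈ closure ({0} : Set ℝ≥0) :=
      map_mem_closure (f := fun ν : ProbabilityMeasure X => ν.toFiniteMeasure.testAgainstNN f)
        hg hcl hmaps
    rw [closure_singleton, Set.mem_singleton_iff] at h0
    have hint : (∫⁻ x, (f x : ℝ≥0∞) ∂(μ : Measure X)) = (μ : Measure X) C := by
      have heq : ∀ x, ((f x : ℝ≥0) : ℝ≥0∞) = C.indicator (fun _ => (1:ℝ≥0∞)) x := by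
        intro x
        show ((C.indicator (fun _ => (1:ℝ≥0)) x : ℝ≥0) : ℝ≥0∞) = C.indicator (fun _ => (1:ℝ≥0∞)) x
        by_cases hx : x ∈ C <;> simp [hx]
      rw [lintegral_congr heq, lintegral_indicator hC.isOpen.measurableSet, setLIntegral_const,
        one_mul]
    have := h0
    rw [FiniteMeasure.testAgainstNN, ProbabilityMeasure.toMeasure_comp_toFiniteMeasure_eq_toMeasure,
      hint] at this
    rw [ENNReal.toNNReal_eq_zero_iff] at this
    rcases this with h | h
    · exact absurd h hpos.ne'
    · exact absurd h (measure_ne_top _ _)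
  · intro hD
    exact mem_closure_of_approx _ μ (fun I ε hε => stmt16_approx D μ hD I ε hε)
end
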